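/- For all integers r ≥ 2 and n ≥ 2r+1, there exists an almost self-centered graph of order n with radius r whose independence number equals n − r; namely the graph Z(n,r) obtained from the cycle v_1, v_2, …, v_{2r} by attaching a pendant edge at v_1 and adding n − 2r − 1 new vertices, each adjacent exactly to v_1 and v_3. -/

import Mathlib

open SimpleGraph

/-- The eccentricity of a vertex `v`: the maximum distance from `v` to any vertex. -/
noncomputable def graphEcc {V : Type*} [Fintype V] (G : SimpleGraph V) (v : V) : ℕ :=
  Finset.univ.sup fun u => G.dist v u

/-- The radius of a graph: the minimum eccentricity over all vertices. -/
noncomputable def graphRadius {V : Type*} [Fintype V] (G : SimpleGraph V) : ℕ :=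
  sInf (Set.range (graphEcc G))

/-- The diameter of a graph: the maximum eccentricity over all vertices. -/
noncomputable def graphDiam {V : Type*} [Fintype V] (G : SimpleGraph V) : ℕ :=
  Finset.univ.sup (graphEcc G)

/-- A connected graph of order `n` is almost self-centered if it has exactly `n - 2`
central vertices (vertices whose eccentricity equals the radius). -/
def IsAlmostSelfCentered {V : Type*} [Fintype V] (G : SimpleGraph V) : Prop :=
  G.Connected ∧ Nat.card {v : V | graphEcc G v = graphRadius G} = Fintype.card V - 2

/-- A connected graph of order `n` is almost peripheral if it has exactly `n - 1`
peripheral vertices (vertices whose eccentricity equals the diameter). -/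
def IsAlmostPeripheral {V : Type*} [Fintype V] (G : SimpleGraph V) : Prop :=
  G.Connected ∧ Nat.card {v : V | graphEcc G v = graphDiam G} = Fintype.card V - 1

/-- The independence number of a graph: the maximum cardinality of a set of pairwise
nonadjacent vertices. -/
noncomputable def graphIndepNum {V : Type*} [Fintype V] (G : SimpleGraph V) : ℕ :=
  sSup {k | ∃ s : Set V, s.Pairwise (fun u v => ¬ G.Adj u v) ∧ s.ncard = k}

/-- The graph `Z(n,r)`: take the cycle `v_1 v_2 … v_{2r}` (here `Fin (2*r)`, with `v_1`
corresponding to `0` and `v_3` to `2`), attach a pendant edge at `v_1`, and add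
`n - 2r - 1` further new vertices each adjacent exactly to `v_1` and `v_3`. -/
def Zgraph (n r : ℕ) : SimpleGraph (Fin (2 * r) ⊕ Unit ⊕ Fin (n - 2 * r - 1)) :=
  SimpleGraph.fromRel fun a b =>
    match a, b with
    | Sum.inl i, Sum.inl j => (SimpleGraph.cycleGraph (2 * r)).Adj i j
    | Sum.inl i, Sum.inr (Sum.inl _) => (i : ℕ) = 0
    | Sum.inl i, Sum.inr (Sum.inr _) => (i : ℕ) = 0 ∨ (i : ℕ) = 2
    | _, _ => False

namespace ZP
variable {n r : ℕ}
open Fin.NatCast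
lemma adj_inl_inl {i j : Fin (2*r)} (h : (cycleGraph (2*r)).Adj i j) :
    (Zgraph n r).Adj (Sum.inl i) (Sum.inl j) := by
  rw [Zgraph, fromRel_adj]
  exact ⟨by simpa using h.ne, Or.inl h⟩

lemma adj_inl_pen {i : Fin (2*r)} (h : i.val = 0) (x : Unit) :
    (Zgraph n r).Adj (Sum.inl i) (Sum.inr (Sum.inl x)) := by
  rw [Zgraph, fromRel_adj]
  exact ⟨by simp, Or.inl h⟩

lemma adj_inl_ext {i : Fin (2*r)} (h : i.val = 0 ∨ i.val = 2) (w : Fin (n - 2*r - 1)) :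
    (Zgraph n r).Adj (Sum.inl i) (Sum.inr (Sum.inr w)) := by
  rw [Zgraph, fromRel_adj]
  exact ⟨by simp, Or.inl h⟩

lemma adj_cases {a b : Fin (2 * r) ⊕ Unit ⊕ Fin (n - 2 * r - 1)}
    (h : (Zgraph n r).Adj a b) :
    (∃ i j, a = Sum.inl i ∧ b = Sum.inl j ∧ (cycleGraph (2*r)).Adj i j) ∨
    (∃ i x, (a = Sum.inl i ∧ b = Sum.inr (Sum.inl x) ∨
             b = Sum.inl i ∧ a = Sum.inr (Sum.inl x)) ∧ i.val = 0) ∨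
    (∃ i w, (a = Sum.inl i ∧ b = Sum.inr (Sum.inr w) ∨
             b = Sum.inl i ∧ a = Sum.inr (Sum.inr w)) ∧ (i.val = 0 ∨ i.val = 2)) := by
  rw [Zgraph, fromRel_adj] at h
  obtain ⟨hne, h | h⟩ := h <;>
    rcases a with i | x | w <;> rcases b with j | y | z <;> simp_all
  · exact h.symm

def dC (r a b : ℕ) : ℕ := min (max a b - min a b) (2*r - (max a b - min a b))

lemma sub_val (h2 : 2 ≤ r) (i j : Fin (2*r)) :
    (i - j).val = if j.val ≤ i.val then i.val - j.val else i.val + 2*r - j.val := by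
  have hv : (i - j).val = (2*r - j.val + i.val) % (2*r) := by rw [Fin.sub_def]
  have hi := i.isLt; have hj := j.isLt
  rcases le_or_gt j.val i.val with h | h
  · have he : 2*r - j.val + i.val = 2*r + (i.val - j.val) := by omega
    rw [he, Nat.add_mod_left, Nat.mod_eq_of_lt (show i.val - j.val < 2*r by omega)] at hv
    rw [if_pos h]
    omega
  · rw [Nat.mod_eq_of_lt (show 2*r - j.val + i.val < 2*r by omega)] at hv
    rw [if_neg (by omega)]
    omega

lemma add_val (h2 : 2 ≤ r) (i j : Fin (2*r)) :
    (i + j).val = if i.val + j.val < 2*r then i.val + j.val else i.val + j.val - 2*r := by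
  have hv : (i + j).val = (i.val + j.val) % (2*r) := by rw [Fin.add_def]
  have hi := i.isLt; have hj := j.isLt
  rcases lt_or_ge (i.val + j.val) (2*r) with h | h
  · rw [Nat.mod_eq_of_lt h] at hv
    rw [if_pos h]
    omega
  · rw [Nat.mod_eq_sub_mod h, Nat.mod_eq_of_lt (by omega)] at hv
    rw [if_neg (by omega)]
    omega

lemma val_one (h2 : 2 ≤ r) [NeZero (2*r)] : (1 : Fin (2*r)).val = 1 := by
  rw [Fin.val_one']
  exact Nat.mod_eq_of_lt (by omega)

lemma cyc_adj_iff_val (h2 : 2 ≤ r) {i j : Fin (2*r)} :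
    (cycleGraph (2*r)).Adj i j ↔
      (i.val = j.val + 1 ∨ j.val = i.val + 1 ∨ (i.val = 0 ∧ j.val = 2*r-1) ∨
        (j.val = 0 ∧ i.val = 2*r-1)) := by
  rw [cycleGraph_adj', sub_val h2, sub_val h2]
  have hi := i.isLt; have hj := j.isLt
  split_ifs <;> omega

lemma adj_succ (h2 : 2 ≤ r) [NeZero (2*r)] (x : Fin (2*r)) :
    (cycleGraph (2*r)).Adj x (x + 1) := by
  rw [cyc_adj_iff_val h2]
  have h1 := add_val h2 x 1
  rw [val_one h2] at h1
  have hx := x.isLt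
  rcases lt_or_ge (x.val + 1) (2*r) with h | h
  · rw [if_pos h] at h1; omega
  · rw [if_neg (by omega)] at h1; omega

lemma adj_pred (h2 : 2 ≤ r) [NeZero (2*r)] (x : Fin (2*r)) :
    (cycleGraph (2*r)).Adj x (x - 1) := by
  rw [cyc_adj_iff_val h2]
  have h1 := sub_val h2 x 1
  rw [val_one h2] at h1
  have hx := x.isLt
  rcases le_or_gt 1 x.val with h | h
  · rw [if_pos h] at h1; omega
  · rw [if_neg (by omega)] at h1; omega

lemma walk_forward (h2 : 2 ≤ r) [NeZero (2*r)] (i : Fin (2*r)) (k : ℕ) :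
    ∃ w : (Zgraph n r).Walk (Sum.inl i) (Sum.inl (i + (k : Fin (2*r)))), w.length = k := by
  induction k with
  | zero =>
    have h : (Sum.inl (i + ((0:ℕ) : Fin (2*r))) : Fin (2 * r) ⊕ Unit ⊕ Fin (n - 2 * r - 1))
        = Sum.inl i := by norm_num
    exact ⟨(Walk.nil).copy rfl h.symm, by simp⟩
  | succ k ih =>
    obtain ⟨w, hw⟩ := ih
    have hadj : (Zgraph n r).Adj (Sum.inl (i + (k : Fin (2*r))))
        (Sum.inl (i + (k : Fin (2*r)) + 1)) := adj_inl_inl (adj_succ h2 _)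
    have he : (Sum.inl (i + (k : Fin (2*r)) + 1) : Fin (2 * r) ⊕ Unit ⊕ Fin (n - 2 * r - 1))
        = Sum.inl (i + ((k+1 : ℕ) : Fin (2*r))) := by
      congr 1
      push_cast
      exact add_assoc _ _ _
    exact ⟨(w.concat hadj).copy rfl he, by simp [hw]⟩

lemma walk_backward (h2 : 2 ≤ r) [NeZero (2*r)] (i : Fin (2*r)) (k : ℕ) :
    ∃ w : (Zgraph n r).Walk (Sum.inl i) (Sum.inl (i - (k : Fin (2*r)))), w.length = k := by
  induction k with
  | zero =>
    have h : (Sum.inl (i - ((0:ℕ) : Fin (2*r))) : Fin (2 * r) ⊕ Unit ⊕ Fin (n - 2 * r - 1))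
        = Sum.inl i := by norm_num
    exact ⟨(Walk.nil).copy rfl h.symm, by simp⟩
  | succ k ih =>
    obtain ⟨w, hw⟩ := ih
    have hadj : (Zgraph n r).Adj (Sum.inl (i - (k : Fin (2*r))))
        (Sum.inl (i - (k : Fin (2*r)) - 1)) := adj_inl_inl (adj_pred h2 _)
    have he : (Sum.inl (i - (k : Fin (2*r)) - 1) : Fin (2 * r) ⊕ Unit ⊕ Fin (n - 2 * r - 1))
        = Sum.inl (i - ((k+1 : ℕ) : Fin (2*r))) := by
      congr 1
      push_cast
      exact sub_sub _ _ _
    exact ⟨(w.concat hadj).copy rfl he, by simp [hw]⟩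

lemma reach0 (h2 : 2 ≤ r) [NeZero (2*r)] (v : Fin (2 * r) ⊕ Unit ⊕ Fin (n - 2 * r - 1)) :
    (Zgraph n r).Reachable (Sum.inl ⟨0, by omega⟩) v := by
  rcases v with j | x | w
  · obtain ⟨w, -⟩ := walk_forward (n := n) h2 (⟨0, by omega⟩ : Fin (2*r)) j.val
    have he : (⟨0, by omega⟩ : Fin (2*r)) + (j.val : Fin (2*r)) = j := by
      apply Fin.ext
      rw [add_val h2, Fin.val_cast_of_lt j.isLt]
      simp [j.isLt]
    rw [he] at w
    exact ⟨w⟩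
  · exact (adj_inl_pen rfl x).reachable
  · exact (adj_inl_ext (Or.inl rfl) w).reachable

lemma conn (h2 : 2 ≤ r) : (Zgraph n r).Connected := by
  haveI : NeZero (2*r) := ⟨by omega⟩
  have : (Zgraph n r).Preconnected := fun u v => ((reach0 h2 u).symm.trans (reach0 h2 v))
  exact ⟨this⟩

lemma dist_inl_inl (h2 : 2 ≤ r) (i j : Fin (2*r)) :
    (Zgraph n r).dist (Sum.inl i) (Sum.inl j) ≤ dC r i.val j.val := by
  haveI : NeZero (2*r) := ⟨by omega⟩
  obtain ⟨w1, hw1⟩ := walk_forward (n := n) h2 i (j - i).val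
  obtain ⟨w2, hw2⟩ := walk_backward (n := n) h2 i (i - j).val
  have e1 : i + (((j - i).val : Fin (2*r))) = j := by
    rw [Fin.cast_val_eq_self, add_comm]; exact sub_add_cancel j i
  have e2 : i - (((i - j).val : Fin (2*r))) = j := by
    rw [Fin.cast_val_eq_self]; exact sub_sub_cancel i j
  have d1 := (Zgraph n r).dist_le w1
  have d2 := (Zgraph n r).dist_le w2
  rw [hw1, e1] at d1; rw [hw2, e2] at d2
  have s1 := sub_val h2 j i; have s2 := sub_val h2 i j
  have hi := i.isLt; have hj := j.isLt
  unfold dC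
  split_ifs at s1 s2 <;> omega

lemma dist_pen (h2 : 2 ≤ r) [NeZero (2*r)] (x : Unit) :
    (Zgraph n r).dist (Sum.inl (⟨0, by omega⟩ : Fin (2*r))) (Sum.inr (Sum.inl x)) ≤ 1 :=
  by
  have h := (Zgraph n r).dist_le
    (Walk.cons (adj_inl_pen (n := n) (i := (⟨0, by omega⟩ : Fin (2*r))) rfl x) Walk.nil)
  exact h

lemma dist_ext0 (h2 : 2 ≤ r) [NeZero (2*r)] (w : Fin (n - 2*r - 1)) :
    (Zgraph n r).dist (Sum.inl (⟨0, by omega⟩ : Fin (2*r))) (Sum.inr (Sum.inr w)) ≤ 1 :=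
  by
  have h := (Zgraph n r).dist_le
    (Walk.cons (adj_inl_ext (n := n) (i := (⟨0, by omega⟩ : Fin (2*r))) (Or.inl rfl) w) Walk.nil)
  exact h

lemma dist_ext2 (h2 : 2 ≤ r) [NeZero (2*r)] (w : Fin (n - 2*r - 1)) :
    (Zgraph n r).dist (Sum.inl (⟨2, by omega⟩ : Fin (2*r))) (Sum.inr (Sum.inr w)) ≤ 1 :=
  by
  have h := (Zgraph n r).dist_le
    (Walk.cons (adj_inl_ext (n := n) (i := (⟨2, by omega⟩ : Fin (2*r))) (Or.inr rfl) w) Walk.nil)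
  simpa using h

lemma dist_inl_pen (h2 : 2 ≤ r) (i : Fin (2*r)) (x : Unit) :
    (Zgraph n r).dist (Sum.inl i) (Sum.inr (Sum.inl x)) ≤ dC r i.val 0 + 1 := by
  haveI : NeZero (2*r) := ⟨by omega⟩
  calc (Zgraph n r).dist (Sum.inl i) (Sum.inr (Sum.inl x))
      ≤ (Zgraph n r).dist (Sum.inl i) (Sum.inl ⟨0, by omega⟩)
        + (Zgraph n r).dist (Sum.inl ⟨0, by omega⟩) (Sum.inr (Sum.inl x)) :=
        (conn h2).dist_triangle
    _ ≤ dC r i.val 0 + 1 :=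
        Nat.add_le_add (dist_inl_inl h2 i ⟨0, by omega⟩) (dist_pen h2 x)

lemma dist_inl_ext (h2 : 2 ≤ r) (i : Fin (2*r)) (w : Fin (n - 2*r - 1)) :
    (Zgraph n r).dist (Sum.inl i) (Sum.inr (Sum.inr w))
      ≤ min (dC r i.val 0) (dC r i.val 2) + 1 := by
  haveI : NeZero (2*r) := ⟨by omega⟩
  have b0 : (Zgraph n r).dist (Sum.inl i) (Sum.inr (Sum.inr w)) ≤ dC r i.val 0 + 1 :=
    le_trans (conn h2).dist_triangle
      (Nat.add_le_add (dist_inl_inl h2 i ⟨0, by omega⟩) (dist_ext0 h2 w))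
  have b2 : (Zgraph n r).dist (Sum.inl i) (Sum.inr (Sum.inr w)) ≤ dC r i.val 2 + 1 :=
    le_trans (conn h2).dist_triangle
      (Nat.add_le_add (dist_inl_inl h2 i ⟨2, by omega⟩) (dist_ext2 h2 w))
  omega

lemma dist_inr_inr (h2 : 2 ≤ r) (a b : Unit ⊕ Fin (n - 2*r - 1)) :
    (Zgraph n r).dist (Sum.inr a) (Sum.inr b) ≤ 2 := by
  haveI : NeZero (2*r) := ⟨by omega⟩
  have h0 : ∀ c : Unit ⊕ Fin (n - 2*r - 1),
      (Zgraph n r).dist (Sum.inl (⟨0, by omega⟩ : Fin (2*r))) (Sum.inr c) ≤ 1 := by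
    rintro (x | w)
    · exact dist_pen h2 x
    · exact dist_ext0 h2 w
  calc (Zgraph n r).dist (Sum.inr a) (Sum.inr b)
      ≤ (Zgraph n r).dist (Sum.inr a) (Sum.inl ⟨0, by omega⟩)
        + (Zgraph n r).dist (Sum.inl ⟨0, by omega⟩) (Sum.inr b) := (conn h2).dist_triangle
    _ ≤ 2 := by
        have := h0 a
        rw [SimpleGraph.dist_comm] at this
        have hb := h0 b
        omega

lemma pot_le {V : Type*} {G : SimpleGraph V} (f : V → ℕ)
    (hf : ∀ a b, G.Adj a b → f b ≤ f a + 1) :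
    ∀ {a b : V} (w : G.Walk a b), f b ≤ f a + w.length := by
  intro a b w
  induction w with
  | nil => simp
  | @cons u v _ h p ih =>
    have := hf u v h
    rw [Walk.length_cons]
    omega

lemma pot_dist {V : Type*} {G : SimpleGraph V} (f : V → ℕ)
    (hf : ∀ a b, G.Adj a b → f b ≤ f a + 1) {a b : V} (hr : G.Reachable a b) :
    f b ≤ f a + G.dist a b := by
  obtain ⟨w, hw⟩ := hr.exists_walk_length_eq_dist
  rw [← hw]
  exact pot_le f hf w

/-- generic Lipschitz potential on `Zgraph` built from cycle part `c`, pendant value `p`,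
extra value `e`. -/
lemma pot_lip (h2 : 2 ≤ r) (c : ℕ → ℕ) (p e : ℕ)
    (hc : ∀ a b : ℕ, a < 2*r → b < 2*r →
      (a = b+1 ∨ b = a+1 ∨ (a = 0 ∧ b = 2*r-1) ∨ (b = 0 ∧ a = 2*r-1)) → c b ≤ c a + 1)
    (hp0 : p ≤ c 0 + 1) (h0p : c 0 ≤ p + 1)
    (he0 : e ≤ c 0 + 1) (h0e : c 0 ≤ e + 1) (he2 : e ≤ c 2 + 1) (h2e : c 2 ≤ e + 1) :
    ∀ a b, (Zgraph n r).Adj a b →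
      (Sum.elim (fun j : Fin (2*r) => c j.val) (Sum.elim (fun _ => p) (fun _ => e))) b ≤
      (Sum.elim (fun j : Fin (2*r) => c j.val) (Sum.elim (fun _ => p) (fun _ => e))) a + 1 := by
  intro a b h
  rcases adj_cases h with ⟨i, j, rfl, rfl, hadj⟩ |
    ⟨i, x, (⟨rfl, rfl⟩ | ⟨rfl, rfl⟩), hi⟩ | ⟨i, w, (⟨rfl, rfl⟩ | ⟨rfl, rfl⟩), hi⟩
  · have := (cyc_adj_iff_val h2).mp hadj
    simpa using hc i.val j.val i.isLt j.isLt (by tauto)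
  · simp only [Sum.elim_inl, Sum.elim_inr]
    rw [hi]
    omega
  · simp only [Sum.elim_inl, Sum.elim_inr]
    rw [hi]
    omega
  · simp only [Sum.elim_inl, Sum.elim_inr]
    rcases hi with hi | hi <;> rw [hi] <;> omega
  · simp only [Sum.elim_inl, Sum.elim_inr]
    rcases hi with hi | hi <;> rw [hi] <;> omega

lemma ecc_inl_le (h2 : 2 ≤ r) {i : Fin (2*r)} (hi : i.val ≠ r) :
    graphEcc (Zgraph n r) (Sum.inl i) ≤ r := by
  apply Finset.sup_le
  rintro (j | x | w) -
  · exact le_trans (dist_inl_inl h2 i j)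
      (by have := i.isLt; have := j.isLt; unfold dC; omega)
  · exact le_trans (dist_inl_pen h2 i x) (by have := i.isLt; unfold dC; omega)
  · exact le_trans (dist_inl_ext h2 i w) (by have := i.isLt; unfold dC; omega)

lemma ecc_ext_le (h2 : 2 ≤ r) (w : Fin (n - 2*r - 1)) :
    graphEcc (Zgraph n r) (Sum.inr (Sum.inr w)) ≤ r := by
  apply Finset.sup_le
  rintro (j | x | w') -
  · rw [SimpleGraph.dist_comm]
    exact le_trans (dist_inl_ext h2 j w)
      (by have := j.isLt; unfold dC; omega)
  · exact le_trans (dist_inr_inr h2 _ _) (by omega)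
  · exact le_trans (dist_inr_inr h2 _ _) (by omega)

lemma ecc_ge_cycle (h2 : 2 ≤ r) (i : Fin (2*r)) :
    r ≤ graphEcc (Zgraph n r) (Sum.inl i) := by
  haveI : NeZero (2*r) := ⟨by omega⟩
  set t : Fin (2*r) := i + ⟨r, by omega⟩ with ht
  have hf := pot_lip (n := n) h2 (fun a => dC r i.val a) (dC r i.val 0 + 1)
    (min (dC r i.val 0) (dC r i.val 2) + 1)
    (fun a b ha hb hab => by simp only [dC]; omega)
    (by simp only [dC]; omega) (by simp only [dC]; omega)
    (by simp only [dC]; omega) (by simp only [dC]; omega) (by simp only [dC]; omega) (by simp only [dC]; omega)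
  have hd := pot_dist _ hf (((conn h2).preconnected) (Sum.inl i) (Sum.inl t))
  simp only [Sum.elim_inl] at hd
  have hti : t.val = if i.val + r < 2*r then i.val + r else i.val + r - 2*r := by
    rw [ht, add_val h2]
  have hv1 : dC r i.val i.val = 0 := by unfold dC; omega
  have hv2 : dC r i.val t.val = r := by
    have hi := i.isLt; have hT := t.isLt
    unfold dC; split_ifs at hti <;> omega
  have hle : (Zgraph n r).dist (Sum.inl i) (Sum.inl t) ≤
      graphEcc (Zgraph n r) (Sum.inl i) := Finset.le_sup (Finset.mem_univ _)
  omega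

lemma dist_pen_vr (h2 : 2 ≤ r) :
    r + 1 ≤ (Zgraph n r).dist (Sum.inr (Sum.inl ())) (Sum.inl (⟨r, by omega⟩ : Fin (2*r))) := by
  haveI : NeZero (2*r) := ⟨by omega⟩
  have hf := pot_lip (n := n) h2 (fun a => dC r 0 a + 1) 0 2
    (fun a b ha hb hab => by simp only [dC]; omega)
    (by simp only [dC]; omega) (by simp only [dC]; omega)
    (by simp only [dC]; omega) (by simp only [dC]; omega) (by simp only [dC]; omega) (by simp only [dC]; omega)
  have hd := pot_dist _ hf
    (((conn h2).preconnected) (Sum.inr (Sum.inl ())) (Sum.inl (⟨r, by omega⟩ : Fin (2*r))))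
  simp only [Sum.elim_inl, Sum.elim_inr] at hd
  have hv2 : dC r 0 r = r := by unfold dC; omega
  omega

lemma ecc_pen_ge (h2 : 2 ≤ r) (x : Unit) :
    r + 1 ≤ graphEcc (Zgraph n r) (Sum.inr (Sum.inl x)) := by
  rcases x
  have hle : (Zgraph n r).dist (Sum.inr (Sum.inl ())) (Sum.inl (⟨r, by omega⟩ : Fin (2*r))) ≤
      graphEcc (Zgraph n r) (Sum.inr (Sum.inl ())) := Finset.le_sup (Finset.mem_univ _)
  exact le_trans (dist_pen_vr h2) hle

lemma ecc_vr_ge (h2 : 2 ≤ r) :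
    r + 1 ≤ graphEcc (Zgraph n r) (Sum.inl (⟨r, by omega⟩ : Fin (2*r))) := by
  have hle : (Zgraph n r).dist (Sum.inl (⟨r, by omega⟩ : Fin (2*r))) (Sum.inr (Sum.inl ())) ≤
      graphEcc (Zgraph n r) (Sum.inl (⟨r, by omega⟩ : Fin (2*r))) :=
    Finset.le_sup (Finset.mem_univ _)
  rw [SimpleGraph.dist_comm] at hle
  exact le_trans (dist_pen_vr h2) hle

lemma ecc_ext_ge (h2 : 2 ≤ r) (w : Fin (n - 2*r - 1)) :
    r ≤ graphEcc (Zgraph n r) (Sum.inr (Sum.inr w)) := by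
  haveI : NeZero (2*r) := ⟨by omega⟩
  have hf := pot_lip (n := n) h2 (fun a => min (dC r 0 a) (dC r 2 a) + 1) 2 0
    (fun a b ha hb hab => by simp only [dC]; omega)
    (by simp only [dC]; omega) (by simp only [dC]; omega)
    (by simp only [dC]; omega) (by simp only [dC]; omega) (by simp only [dC]; omega) (by simp only [dC]; omega)
  have hd := pot_dist _ hf
    (((conn h2).preconnected) (Sum.inr (Sum.inr w)) (Sum.inl (⟨r + 1, by omega⟩ : Fin (2*r))))
  simp only [Sum.elim_inl, Sum.elim_inr] at hd
  have hv2 : min (dC r 0 (r+1)) (dC r 2 (r+1)) + 1 = r := by simp only [dC]; omega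
  have hle : (Zgraph n r).dist (Sum.inr (Sum.inr w)) (Sum.inl (⟨r + 1, by omega⟩ : Fin (2*r))) ≤
      graphEcc (Zgraph n r) (Sum.inr (Sum.inr w)) := Finset.le_sup (Finset.mem_univ _)
  omega

lemma ecc_ge_all (h2 : 2 ≤ r) (v : Fin (2 * r) ⊕ Unit ⊕ Fin (n - 2 * r - 1)) :
    r ≤ graphEcc (Zgraph n r) v := by
  rcases v with j | x | w
  · exact ecc_ge_cycle h2 j
  · exact le_trans (by omega) (ecc_pen_ge h2 x)
  · exact ecc_ext_ge h2 w

lemma radius_eq (h2 : 2 ≤ r) : graphRadius (Zgraph n r) = r := by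
  have h0 : graphEcc (Zgraph n r) (Sum.inl (⟨0, by omega⟩ : Fin (2*r))) = r :=
    le_antisymm (ecc_inl_le h2 (by simp; omega)) (ecc_ge_cycle h2 _)
  apply le_antisymm
  · have h1 : graphRadius (Zgraph n r) ≤
        graphEcc (Zgraph n r) (Sum.inl (⟨0, by omega⟩ : Fin (2*r))) :=
      csInf_le (OrderBot.bddBelow _) ⟨_, rfl⟩
    exact le_trans h1 (le_of_eq h0)
  · exact le_csInf ⟨_, ⟨Sum.inr (Sum.inl ()), rfl⟩⟩ (by rintro _ ⟨v, rfl⟩; exact ecc_ge_all h2 v)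

lemma compl_pair_ncard {V : Type*} [Fintype V] (a b : V) (hab : a ≠ b) :
    ({a, b} : Set V)ᶜ.ncard = Fintype.card V - 2 := by
  have h1 := Set.ncard_add_ncard_compl ({a, b} : Set V)
  rw [Set.ncard_pair hab, Nat.card_eq_fintype_card] at h1
  omega

lemma central_set (h2 : 2 ≤ r) :
    {v : Fin (2 * r) ⊕ Unit ⊕ Fin (n - 2 * r - 1) | graphEcc (Zgraph n r) v = r} =
      ({Sum.inr (Sum.inl ()), Sum.inl (⟨r, by omega⟩ : Fin (2*r))} :
        Set (Fin (2 * r) ⊕ Unit ⊕ Fin (n - 2 * r - 1)))ᶜ := by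
  ext v
  simp only [Set.mem_setOf_eq, Set.mem_compl_iff, Set.mem_insert_iff, Set.mem_singleton_iff]
  rcases v with i | x | w
  · by_cases hi : i.val = r
    · have hge : r + 1 ≤ graphEcc (Zgraph n r) (Sum.inl i) := by
        have h := ecc_vr_ge (n := n) h2
        rwa [show (⟨r, by omega⟩ : Fin (2*r)) = i from Fin.ext hi.symm] at h
      exact ⟨fun h => by omega,
        fun h => absurd (Or.inr (congrArg Sum.inl (Fin.ext hi))) h⟩
    · constructor
      · rintro - (h | h) <;> simp_all [Fin.ext_iff]
      · exact fun _ => le_antisymm (ecc_inl_le h2 hi) (ecc_ge_cycle h2 i)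
  · have hge := ecc_pen_ge (n := n) h2 x
    exact ⟨fun h => absurd hge (by rw [h]; omega),
      fun h => absurd (Or.inl (by rcases x; rfl)) h⟩
  · constructor
    · rintro - (h | h) <;> simp_all
    · exact fun _ => le_antisymm (ecc_ext_le h2 w) (ecc_ext_ge h2 w)

lemma central_card (h2 : 2 ≤ r) :
    Nat.card {v : Fin (2 * r) ⊕ Unit ⊕ Fin (n - 2 * r - 1) |
        graphEcc (Zgraph n r) v = graphRadius (Zgraph n r)} =
      Fintype.card (Fin (2 * r) ⊕ Unit ⊕ Fin (n - 2 * r - 1)) - 2 := by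
  rw [Nat.card_coe_set_eq]
  rw [radius_eq h2, central_set h2]
  exact compl_pair_ncard _ _ (by simp)

lemma odd_card (h2 : 2 ≤ r) : {j : Fin (2*r) | j.val % 2 = 1}.ncard = r := by
  classical
  have key : (Finset.filter (fun j : Fin (2*r) => j.val % 2 = 1) Finset.univ).card =
      (Finset.univ : Finset (Fin r)).card := Finset.card_bij'
    (fun j _ => (⟨j.val / 2, by have := j.isLt; omega⟩ : Fin r))
    (fun k _ => (⟨2*k.val + 1, by have := k.isLt; omega⟩ : Fin (2*r)))
    (fun a ha => Finset.mem_univ _)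
    (fun a ha => by simp only [Finset.mem_filter, Finset.mem_univ, true_and]; omega)
    (fun a ha => by
      apply Fin.ext
      simp only [Finset.mem_filter] at ha
      have := a.isLt
      simp only []
      omega)
    (fun a ha => by apply Fin.ext; simp only []; omega)
  rw [Set.ncard_eq_toFinset_card', Set.toFinset_setOf, key, Finset.card_fin]

lemma indep_ub (h2 : 2 ≤ r) (hn : 2*r+1 ≤ n)
    (s : Set (Fin (2 * r) ⊕ Unit ⊕ Fin (n - 2 * r - 1)))
    (hs : s.Pairwise (fun u v => ¬ (Zgraph n r).Adj u v)) : s.ncard ≤ n - r := by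
  classical
  set F : (Fin (2 * r) ⊕ Unit ⊕ Fin (n - 2 * r - 1)) → (Fin r ⊕ Unit ⊕ Fin (n - 2*r - 1)) :=
    Sum.map (fun j => (⟨j.val / 2, by have := j.isLt; omega⟩ : Fin r)) id with hF
  have hinj : Set.InjOn F s := by
    rintro a ha b hb hab
    by_contra hne
    rcases a with i | p <;> rcases b with j | q <;>
      simp only [hF, Sum.map, Sum.elim_inl, Sum.elim_inr, id, Function.comp] at hab <;>
      try exact (Sum.inl_ne_inr hab).elim
    · rw [Sum.inl.injEq, Fin.mk.injEq] at hab
      have hv : i.val ≠ j.val := fun h => hne (congrArg Sum.inl (Fin.ext h))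
      have hI := i.isLt; have hJ := j.isLt
      have hadj : (cycleGraph (2*r)).Adj i j := by rw [cyc_adj_iff_val h2]; omega
      exact hs ha hb hne (adj_inl_inl hadj)
    · exact (Sum.inr_ne_inl hab).elim
    · rw [Sum.inr.injEq] at hab
      exact hne (congrArg Sum.inr hab)
  calc s.ncard = (F '' s).ncard := (Set.ncard_image_of_injOn hinj).symm
    _ ≤ (Set.univ : Set (Fin r ⊕ Unit ⊕ Fin (n - 2*r - 1))).ncard :=
        Set.ncard_le_ncard (Set.subset_univ _) Set.finite_univ
    _ = Fintype.card (Fin r ⊕ Unit ⊕ Fin (n - 2*r - 1)) := by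
        rw [Set.ncard_univ, Nat.card_eq_fintype_card]
    _ ≤ n - r := by simp only [Fintype.card_sum, Fintype.card_fin, Fintype.card_unit]; omega

lemma indep_mem (h2 : 2 ≤ r) (hn : 2*r+1 ≤ n) :
    ∃ s : Set (Fin (2 * r) ⊕ Unit ⊕ Fin (n - 2 * r - 1)),
      s.Pairwise (fun u v => ¬ (Zgraph n r).Adj u v) ∧ s.ncard = n - r := by
  classical
  refine ⟨(Sum.inl '' {j : Fin (2*r) | j.val % 2 = 1}) ∪ Set.range Sum.inr, ?_, ?_⟩
  · rintro a ha b hb hne hadj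
    have hodd : ∀ i : Fin (2*r), Sum.inl i ∈
        (Sum.inl '' {j : Fin (2*r) | j.val % 2 = 1}) ∪
          (Set.range Sum.inr : Set (Fin (2 * r) ⊕ Unit ⊕ Fin (n - 2 * r - 1))) →
        i.val % 2 = 1 := by
      rintro i (⟨i', hi', he⟩ | ⟨y, hy⟩)
      · have he' := Sum.inl_injective he
        rwa [← he']
      · exact absurd hy (by simp)
    rcases adj_cases hadj with ⟨i, j, rfl, rfl, hadj'⟩ |
      ⟨i, x, (⟨rfl, rfl⟩ | ⟨rfl, rfl⟩), hi⟩ | ⟨i, w, (⟨rfl, rfl⟩ | ⟨rfl, rfl⟩), hi⟩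
    · have h1 := hodd i ha
      have h2' := hodd j hb
      have := (cyc_adj_iff_val h2).mp hadj'
      have hI := i.isLt
      omega
    · have := hodd i ha; omega
    · have := hodd i hb; omega
    · have := hodd i ha; omega
    · have := hodd i hb; omega
  · rw [Set.ncard_union_eq]
    · rw [Set.ncard_image_of_injOn Sum.inl_injective.injOn, odd_card h2]
      rw [← Set.image_univ, Set.ncard_image_of_injOn Sum.inr_injective.injOn, Set.ncard_univ,
        Nat.card_eq_fintype_card]
      simp only [Fintype.card_sum, Fintype.card_fin, Fintype.card_unit]
      omega
    · rw [Set.disjoint_left]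
      rintro a ⟨i, -, rfl⟩ ⟨y, hy⟩
      exact Sum.inr_ne_inl hy

lemma indep_eq (h2 : 2 ≤ r) (hn : 2*r+1 ≤ n) : graphIndepNum (Zgraph n r) = n - r := by
  obtain ⟨S, hS, hcard⟩ := indep_mem h2 hn
  have hmem : (n - r) ∈ {k | ∃ s : Set (Fin (2 * r) ⊕ Unit ⊕ Fin (n - 2 * r - 1)),
      s.Pairwise (fun u v => ¬ (Zgraph n r).Adj u v) ∧ s.ncard = k} := ⟨S, hS, hcard⟩
  have hub : ∀ k ∈ {k | ∃ s : Set (Fin (2 * r) ⊕ Unit ⊕ Fin (n - 2 * r - 1)),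
      s.Pairwise (fun u v => ¬ (Zgraph n r).Adj u v) ∧ s.ncard = k}, k ≤ n - r := by
    rintro k ⟨s, hs, rfl⟩
    exact indep_ub h2 hn s hs
  exact le_antisymm (csSup_le ⟨_, hmem⟩ hub) (le_csSup ⟨n - r, hub⟩ hmem)

end ZP

theorem Zgraph_almostSelfCentered_indepNum (n r : ℕ) (h2 : 2 ≤ r) (hn : 2 * r + 1 ≤ n) :
    IsAlmostSelfCentered (Zgraph n r) ∧
      Fintype.card (Fin (2 * r) ⊕ Unit ⊕ Fin (n - 2 * r - 1)) = n ∧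
      graphRadius (Zgraph n r) = r ∧
      graphIndepNum (Zgraph n r) = n - r := by
  refine ⟨⟨ZP.conn h2, ZP.central_card h2⟩, ?_, ZP.radius_eq h2, ZP.indep_eq h2 hn⟩
  simp only [Fintype.card_sum, Fintype.card_fin, Fintype.card_unit]
  omega
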